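/- For every τ > 0 and c > 0, with λ = c(c − √(c²+4))/2 and ν = c(c + √(c²+4))/2, the following strict inequality holds: (e c² τ² / (2 + √(c⁴τ² + 4c²τ² + 4))) · exp((√(c⁴τ² + 4c²τ² + 4) − c²τ)/2) > 1 − (ν − λ)/(ν e^{−λτ} − λ e^{−ντ}). -/

import Mathlib

open Real Filter Set

set_option maxHeartbeats 1000000


theorem lemA (x : ℝ) (hx : 0 ≤ x) : Real.exp (-x) ≤ 1 - x + x^2/2 := by
  have hmono : MonotoneOn (fun t : ℝ => 1 - t + t^2/2 - Real.exp (-t)) (Set.Ici 0) := by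
    apply monotoneOn_of_deriv_nonneg (convex_Ici 0)
    · fun_prop
    · fun_prop
    · intro t ht
      rw [interior_Ici] at ht
      have hd : HasDerivAt (fun t : ℝ => 1 - t + t^2/2 - Real.exp (-t))
          (-1 + t - Real.exp (-t) * (-1)) t := by
        have h1 : HasDerivAt (fun t : ℝ => Real.exp (-t)) (Real.exp (-t) * (-1)) t :=
          (Real.hasDerivAt_exp (-t)).comp t ((hasDerivAt_id t).neg)
        have h2 : HasDerivAt (fun t : ℝ => 1 - t + t^2/2) (-1 + t) t := by
          have h5 := ((hasDerivAt_pow 2 t).div_const 2)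
          have h3 := ((hasDerivAt_const t (1:ℝ)).sub (hasDerivAt_id t)).add h5
          exact h3.congr_deriv (by norm_num)
        exact h2.sub h1
      rw [hd.deriv]
      have := Real.add_one_le_exp (-t)
      nlinarith [Real.exp_pos (-t)]
  have h := hmono (Set.mem_Ici.mpr le_rfl) (Set.mem_Ici.mpr hx) hx
  simp only [] at h
  have : (fun t : ℝ => 1 - t + t^2/2 - Real.exp (-t)) 0 = 0 := by simp
  linarith [h, this.symm ▸ h]

theorem lemB (x : ℝ) (hx : 0 ≤ x) : Real.exp x - 1 - x ≤ x^2/2 * Real.exp x := by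
  have hmono : MonotoneOn (fun t : ℝ => t^2/2 + (1+t) * Real.exp (-t) - 1) (Set.Ici 0) := by
    apply monotoneOn_of_deriv_nonneg (convex_Ici 0)
    · fun_prop
    · fun_prop
    · intro t ht
      rw [interior_Ici] at ht
      have h1 : HasDerivAt (fun t : ℝ => Real.exp (-t)) (Real.exp (-t) * (-1)) t :=
        (Real.hasDerivAt_exp (-t)).comp t ((hasDerivAt_id t).neg)
      have hd : HasDerivAt (fun t : ℝ => t^2/2 + (1+t) * Real.exp (-t) - 1)
          (t + (1 * Real.exp (-t) + (1+t) * (Real.exp (-t) * (-1)))) t := by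
        have h2 : HasDerivAt (fun t : ℝ => (1+t) * Real.exp (-t))
            (1 * Real.exp (-t) + (1+t) * (Real.exp (-t) * (-1))) t := by
          have h3 : HasDerivAt (fun t : ℝ => 1 + t) 1 t := by
            exact (hasDerivAt_id t).const_add 1
          exact h3.mul h1
        have h4 : HasDerivAt (fun t : ℝ => t^2/2) t t := by
          have h5 := ((hasDerivAt_pow 2 t).div_const 2)
          exact h5.congr_deriv (by norm_num)
        exact (h4.add h2).sub_const 1
      rw [hd.deriv]
      have := Real.add_one_le_exp (-t)
      have h5 : Real.exp (-t) ≤ 1 := Real.exp_le_one_iff.mpr (by linarith [ht.out.le])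
      nlinarith [Real.exp_pos (-t), ht.out.le]
  have h := hmono (Set.mem_Ici.mpr le_rfl) (Set.mem_Ici.mpr hx) hx
  have h0 : (fun t : ℝ => t^2/2 + (1+t) * Real.exp (-t) - 1) 0 = 0 := by simp
  have hkey : 0 ≤ x^2/2 + (1+x) * Real.exp (-x) - 1 := by
    have := h0 ▸ h
    simpa using this
  have hmul : Real.exp (-x) * Real.exp x = 1 := by
    rw [← Real.exp_add]; simp
  nlinarith [Real.exp_pos x]

theorem key (a b : ℝ) (ha : 0 < a) (hb : 0 < b) :
    1 - (a+b)/(b*Real.exp a + a*Real.exp (-b)) <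
      Real.exp 1 * (a*b) / (2 + Real.sqrt ((a+b)^2+4)) *
        Real.exp ((Real.sqrt ((a+b)^2+4) - (b-a))/2) := by
  set s := Real.sqrt ((a+b)^2+4) with hs_def
  have hsq : s^2 = (a+b)^2+4 := Real.sq_sqrt (by positivity)
  have hs0 : 0 ≤ s := Real.sqrt_nonneg _
  have hs2 : 2 ≤ s := by nlinarith
  have hsab : a + b ≤ s := by nlinarith
  set D := b*Real.exp a + a*Real.exp (-b) with hD_def
  have hD0 : 0 < D := by positivity
  have hea := Real.add_one_le_exp a
  have heb := Real.add_one_le_exp (-b)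
  have hea1 : Real.exp a - 1 ≤ a * Real.exp a := by
    have h1 : Real.exp (-a) * Real.exp a = 1 := by rw [← Real.exp_add]; simp
    nlinarith [Real.add_one_le_exp (-a), Real.exp_pos a]
  have hDl : a + b ≤ D := by nlinarith [lemB a ha.le, lemA b hb.le, Real.exp_pos a]
  have hDu : D - (a+b) ≤ a*b/2*(a*Real.exp a + b) := by
    nlinarith [lemB a ha.le, lemA b hb.le]
  have hDub : D ≤ b*Real.exp a + a := by
    nlinarith [Real.exp_le_one_iff.mpr (by linarith : -b ≤ 0)]
  have mono : ∀ t : ℝ, 0 ≤ t → t ≤ s → Real.exp (t/2) * (2+s) ≤ Real.exp (s/2) * (2+t) := by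
    intro t ht hts
    have hsplit : Real.exp (s/2) = Real.exp (t/2) * Real.exp ((s-t)/2) := by
      rw [← Real.exp_add]; ring_nf
    have h1 := Real.add_one_le_exp ((s-t)/2)
    rw [hsplit]
    nlinarith [mul_le_mul_of_nonneg_left h1
        (mul_nonneg (Real.exp_pos (t/2)).le (by linarith : (0:ℝ) ≤ 2+t)),
      mul_nonneg (mul_nonneg (Real.exp_pos (t/2)).le ht) (by linarith : (0:ℝ) ≤ s - t)]
  have hsplit2 : Real.exp ((s-(b-a))/2) = Real.exp (s/2) * Real.exp ((a-b)/2) := by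
    rw [← Real.exp_add]; ring_nf
  have h2s : (0:ℝ) < 2 + s := by linarith
  have h8 : (2:ℝ) < Real.exp 1 := by
    have := Real.exp_one_gt_d9; linarith
  rcases le_total (a+b) 2 with hc2 | hc2
  · -- Case A : a + b ≤ 2
    have hLHS : 1 - (a+b)/D ≤ a*b/2*Real.exp a := by
      rw [show 1 - (a+b)/D = (D - (a+b))/D by field_simp, div_le_iff₀ hD0]
      have h1 : a*b/2*(a*Real.exp a + b) ≤ a*b/2*Real.exp a*(a+b) := by
        nlinarith [mul_nonneg (mul_nonneg (mul_pos ha hb).le hb.le)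
          (by linarith : (0:ℝ) ≤ Real.exp a - 1)]
      have h2 : a*b/2*Real.exp a*(a+b) ≤ a*b/2*Real.exp a*D :=
        mul_le_mul_of_nonneg_left hDl (by positivity)
      linarith
    have hE : Real.exp 1^2/4*(a*b)*Real.exp ((a-b)/2) ≤
        Real.exp 1 * (a*b) / (2+s) * Real.exp ((s-(b-a))/2) := by
      rw [hsplit2, show Real.exp 1 * (a*b) / (2+s) * (Real.exp (s/2) * Real.exp ((a-b)/2)) =
        Real.exp 1 * (a*b) * (Real.exp (s/2) * Real.exp ((a-b)/2)) / (2+s) by ring,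
        le_div_iff₀ h2s]
      have hm := mono 2 (by norm_num) hs2
      norm_num at hm
      nlinarith [mul_le_mul_of_nonneg_left hm
        (by positivity : (0:ℝ) ≤ Real.exp 1*(a*b)*Real.exp ((a-b)/2)/4)]
    have hfin : a*b/2*Real.exp a < Real.exp 1^2/4*(a*b)*Real.exp ((a-b)/2) := by
      have hsp : Real.exp a = Real.exp ((a-b)/2) * Real.exp ((a+b)/2) := by
        rw [← Real.exp_add]; ring_nf
      have h7 : Real.exp ((a+b)/2) ≤ Real.exp 1 := Real.exp_le_exp.mpr (by linarith)
      rw [hsp]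
      have h9 : (0:ℝ) < a*b*Real.exp ((a-b)/2) := by positivity
      have h10 : Real.exp ((a+b)/2)/2 < Real.exp 1^2/4 := by
        nlinarith [Real.exp_pos 1]
      nlinarith [mul_lt_mul_of_pos_left h10 h9]
    linarith
  · -- Case B : 2 ≤ a + b
    have hD'0 : (0:ℝ) < b*Real.exp a + a := by positivity
    have hLHS : 1 - (a+b)/D ≤ 1 - (a+b)/(b*Real.exp a + a) := by
      have h1 : (a+b)/(b*Real.exp a + a) ≤ (a+b)/D :=
        div_le_div_of_nonneg_left (by linarith) hD0 hDub
      linarith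
    have h2ab : (0:ℝ) < 2 + (a+b) := by linarith
    have hmid : 1 - (a+b)/(b*Real.exp a + a) <
        Real.exp 1 * (a*b) * Real.exp a / (2+(a+b)) := by
      rw [show 1 - (a+b)/(b*Real.exp a + a) = (b*Real.exp a + a - (a+b))/(b*Real.exp a + a) by
        field_simp, div_lt_div_iff₀ hD'0 h2ab]
      have hq1 : b*Real.exp a + a - (a+b) = b*(Real.exp a - 1) := by ring
      have hq2 : b*(Real.exp a - 1)*(2+(a+b)) ≤ a*b*Real.exp a*(2+(a+b)) :=
        mul_le_mul_of_nonneg_right (by nlinarith) (by linarith)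
      have hq3 : a*b*Real.exp a*(2+(a+b)) ≤ a*b*Real.exp a*(2*(a+b)) :=
        mul_le_mul_of_nonneg_left (by linarith) (by positivity)
      have hq4 : a*b*Real.exp a*(2*(a+b)) < Real.exp 1*(a*b)*Real.exp a*(a+b) := by
        have : (0:ℝ) < a*b*Real.exp a*(a+b) := by positivity
        nlinarith
      have hq5 : Real.exp 1*(a*b)*Real.exp a*(a+b) ≤
          Real.exp 1*(a*b)*Real.exp a*(b*Real.exp a + a) := by
        apply mul_le_mul_of_nonneg_left _ (by positivity)
        nlinarith [mul_nonneg hb.le (by linarith : (0:ℝ) ≤ Real.exp a - 1)]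
      linarith
    have hE : Real.exp 1 * (a*b) * Real.exp a / (2+(a+b)) ≤
        Real.exp 1 * (a*b) / (2+s) * Real.exp ((s-(b-a))/2) := by
      rw [hsplit2, show Real.exp 1 * (a*b) / (2+s) * (Real.exp (s/2) * Real.exp ((a-b)/2)) =
        Real.exp 1 * (a*b) * (Real.exp (s/2) * Real.exp ((a-b)/2)) / (2+s) by ring,
        div_le_div_iff₀ h2ab h2s]
      have hm := mono (a+b) (by linarith) hsab
      have hsp : Real.exp a = Real.exp ((a+b)/2) * Real.exp ((a-b)/2) := by
        rw [← Real.exp_add]; ring_nf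
      rw [hsp]
      nlinarith [mul_le_mul_of_nonneg_left hm
        (by positivity : (0:ℝ) ≤ Real.exp 1*(a*b)*Real.exp ((a-b)/2))]
    linarith

/-- `λ = c(c - √(c²+4))/2`. -/
noncomputable def lam (c : ℝ) : ℝ := c * (c - Real.sqrt (c^2 + 4)) / 2

/-- `ν = c(c + √(c²+4))/2`. -/
noncomputable def nu (c : ℝ) : ℝ := c * (c + Real.sqrt (c^2 + 4)) / 2

/-- the strict inequality of Lemma `CK`:
`(e c²τ²/(2 + √(c⁴τ² + 4c²τ² + 4))) exp((√(c⁴τ² + 4c²τ² + 4) - c²τ)/2)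
  > 1 - (ν - λ)/(ν e^{-λτ} - λ e^{-ντ})` for all `τ, c > 0`. -/
theorem stmt_14 (τ c : ℝ) (hτ : 0 < τ) (hc : 0 < c) :
    1 - (nu c - lam c) /
        (nu c * Real.exp (-(lam c) * τ) - lam c * Real.exp (-(nu c) * τ)) <
      Real.exp 1 * c^2 * τ^2 / (2 + Real.sqrt (c^4*τ^2 + 4*c^2*τ^2 + 4)) *
        Real.exp ((Real.sqrt (c^4*τ^2 + 4*c^2*τ^2 + 4) - c^2*τ) / 2) := by
  have hS2 : Real.sqrt (c^2+4) ^ 2 = c^2 + 4 := Real.sq_sqrt (by positivity)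
  have hS0 : 0 ≤ Real.sqrt (c^2+4) := Real.sqrt_nonneg _
  have hSc : c < Real.sqrt (c^2+4) := by nlinarith
  have hlam : lam c < 0 := by
    unfold lam; nlinarith
  have hnu : 0 < nu c := by
    unfold nu
    have : 0 < c + Real.sqrt (c^2+4) := by linarith
    positivity
  have hsum : lam c + nu c = c^2 := by unfold lam nu; ring
  have hprod : lam c * nu c = -c^2 := by
    unfold lam nu; nlinarith [hS2]
  set a := -(lam c) * τ with ha_def
  set b := nu c * τ with hb_def
  have ha : 0 < a := by rw [ha_def]; exact mul_pos (by linarith) hτ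
  have hb : 0 < b := mul_pos hnu hτ
  have hab : a * b = c^2*τ^2 := by
    rw [ha_def, hb_def]; linear_combination (-(τ^2)) * hprod
  have hba : b - a = c^2*τ := by
    rw [ha_def, hb_def]; linear_combination τ * hsum
  have hsq' : c^4*τ^2 + 4*c^2*τ^2 + 4 = (a+b)^2 + 4 := by
    linear_combination (-(b - a + c^2*τ)) * hba - 4 * hab
  have hfrac' : (nu c - lam c) / (nu c * Real.exp a - lam c * Real.exp (-b))
      = (a+b)/(b*Real.exp a + a*Real.exp (-b)) := by
    have hd1 : 0 < nu c * Real.exp a - lam c * Real.exp (-b) := by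
      nlinarith [Real.exp_pos a, Real.exp_pos (-b)]
    rw [div_eq_div_iff hd1.ne' (by positivity : (0:ℝ) < b*Real.exp a + a*Real.exp (-b)).ne']
    rw [ha_def, hb_def]; ring
  rw [show -(nu c) * τ = -b from by rw [hb_def]; ring, hsq', hfrac',
    show c^2*τ = b - a from hba.symm,
    show Real.exp 1 * c^2 * τ^2 = Real.exp 1 * (a*b) from by rw [hab]; ring]
  exact key a b ha hb
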